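/- For every integer n ≥ 1, B_{n+1}(0) = (-1)^{n+1} / (n · n!). Equivalently, -(1/n!) · ∑_{k=1}^{n} binom(n,k) · (H_n - H_{n-k}) · (-1)^k = (-1)^{n+1} / (n · n!). -/

import Mathlib

open Finset Polynomial

/-- The polynomials `B n ∈ ℚ[X]`: `B 1 = 0` and, for `n ≥ 1`,
`B (n+1) (s) = -(1/n!) ∑_{k=1}^n binom(n,k) (H_n - H_{n-k}) (s-1)^k`. -/
noncomputable def B : ℕ → Polynomial ℚ
  | 0 => 0
  | n + 1 =>
      Polynomial.C (-(n.factorial : ℚ)⁻¹) *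
        ∑ k ∈ Finset.Icc 1 n,
          Polynomial.C ((n.choose k : ℚ) * (harmonic n - harmonic (n - k))) *
            (Polynomial.X - 1) ^ k

lemma alt_choose (n : ℕ) (hn : n ≠ 0) :
    ∑ k ∈ range (n + 1), (-1 : ℚ) ^ k * (n.choose k : ℚ) = 0 := by
  have h := Int.alternating_sum_range_choose_of_ne (n := n) hn
  have := congrArg (fun x : ℤ => (x : ℚ)) h
  push_cast at this
  simpa using this

lemma U_lem (n : ℕ) :
    ∑ j ∈ range (n + 1), (-1 : ℚ) ^ j * (n.choose j : ℚ) * ((j : ℚ) + 1)⁻¹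
      = ((n : ℚ) + 1)⁻¹ := by
  have key : ∀ j ∈ range (n + 1),
      (-1 : ℚ) ^ j * (n.choose j : ℚ) * ((j : ℚ) + 1)⁻¹
        = (-1 : ℚ) ^ j * ((n+1).choose (j+1) : ℚ) * ((n : ℚ) + 1)⁻¹ := by
    intro j _
    have h' : ((n : ℚ) + 1) * (n.choose j : ℚ) = ((n+1).choose (j+1) : ℚ) * ((j : ℚ) + 1) := by
      exact_mod_cast congrArg (fun x : ℕ => (x : ℚ)) (Nat.add_one_mul_choose_eq n j)
    have hj : ((j : ℚ) + 1) ≠ 0 := by positivity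
    have hn : ((n : ℚ) + 1) ≠ 0 := by positivity
    field_simp
    linear_combination h'
  rw [Finset.sum_congr rfl key]
  have h2 : ∑ j ∈ range (n + 1), (-1 : ℚ) ^ j * ((n+1).choose (j+1) : ℚ) = 1 := by
    have h3 := alt_choose (n + 1) (Nat.succ_ne_zero n)
    rw [Finset.sum_range_succ'] at h3
    have h4 : ∑ j ∈ range (n + 1), (-1:ℚ)^(j+1) * ((n+1).choose (j+1) : ℚ)
        = -∑ j ∈ range (n + 1), (-1:ℚ)^j * ((n+1).choose (j+1) : ℚ) := by
      rw [← Finset.sum_neg_distrib]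
      exact Finset.sum_congr rfl fun j _ => by ring
    rw [h4] at h3
    simp at h3
    linarith
  rw [← Finset.sum_mul, h2, one_mul]

lemma T_aux (n : ℕ) :
    ∑ k ∈ range (n + 2), (-1 : ℚ) ^ k * ((n+1).choose k : ℚ) * harmonic k
      = -((n : ℚ) + 1)⁻¹ := by
  rw [Finset.sum_range_succ']
  simp only [harmonic_zero, mul_zero, add_zero]
  have hW : ∑ j ∈ range (n + 1), (-1:ℚ)^(j+1) * (n.choose (j+1) : ℚ) * harmonic (j+1)
      = ∑ k ∈ range (n + 1), (-1:ℚ)^k * (n.choose k : ℚ) * harmonic k := by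
    have h := Finset.sum_range_succ' (fun k => (-1:ℚ)^k * (n.choose k : ℚ) * harmonic k) (n+1)
    simp only [harmonic_zero, mul_zero, add_zero] at h
    rw [← h, Finset.sum_range_succ]
    simp [Nat.choose_succ_self]
  calc ∑ j ∈ range (n + 1), (-1:ℚ)^(j+1) * ((n+1).choose (j+1) : ℚ) * harmonic (j+1)
      = (∑ j ∈ range (n + 1), -((-1:ℚ)^j * (n.choose j : ℚ) * harmonic j))
        + ((∑ j ∈ range (n + 1), (-1:ℚ)^(j+1) * (n.choose (j+1) : ℚ) * harmonic (j+1))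
        + (∑ j ∈ range (n + 1), -((-1:ℚ)^j * (n.choose j : ℚ) * ((j:ℚ)+1)⁻¹))) := by
        rw [← Finset.sum_add_distrib, ← Finset.sum_add_distrib]
        refine Finset.sum_congr rfl fun j _ => ?_
        rw [Nat.choose_succ_succ, harmonic_succ]
        push_cast
        ring
    _ = -((n : ℚ) + 1)⁻¹ := by
        rw [hW, Finset.sum_neg_distrib, Finset.sum_neg_distrib, U_lem]
        ring

lemma T_lem (n : ℕ) (hn : 1 ≤ n) :
    ∑ k ∈ range (n + 1), (-1:ℚ)^k * (n.choose k : ℚ) * harmonic k = -((n:ℚ))⁻¹ := by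
  obtain ⟨m, rfl⟩ : ∃ m, n = m + 1 := ⟨n - 1, by omega⟩
  rw [show m + 1 + 1 = m + 2 by omega, T_aux m]
  push_cast
  ring

lemma S_lem (n : ℕ) (hn : 1 ≤ n) :
    ∑ k ∈ Finset.Icc 1 n, (n.choose k : ℚ) * (harmonic n - harmonic (n - k)) * (-1) ^ k
      = (-1) ^ n / n := by
  have hIcc : ∑ k ∈ Finset.Icc 1 n, (n.choose k : ℚ) * (harmonic n - harmonic (n - k)) * (-1) ^ k
      = ∑ k ∈ range (n + 1), (n.choose k : ℚ) * (harmonic n - harmonic (n - k)) * (-1) ^ k := by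
    refine Finset.sum_subset ?_ ?_
    · intro x hx
      simp only [Finset.mem_Icc] at hx
      simp [Finset.mem_range]; omega
    · intro x hx hnx
      simp only [Finset.mem_range] at hx
      simp only [Finset.mem_Icc, not_and, not_le] at hnx
      have : x = 0 := by omega
      subst this
      simp
  rw [hIcc]
  have hsplit : ∑ k ∈ range (n + 1), (n.choose k : ℚ) * (harmonic n - harmonic (n - k)) * (-1) ^ k
      = harmonic n * (∑ k ∈ range (n + 1), (-1:ℚ)^k * (n.choose k : ℚ))
        - ∑ k ∈ range (n + 1), (-1:ℚ)^k * (n.choose k : ℚ) * harmonic (n - k) := by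
    rw [Finset.mul_sum, ← Finset.sum_sub_distrib]
    exact Finset.sum_congr rfl fun k _ => by ring
  rw [hsplit, alt_choose n (by omega), mul_zero, zero_sub]
  have hrefl : ∑ k ∈ range (n + 1), (-1:ℚ)^k * (n.choose k : ℚ) * harmonic (n - k)
      = (-1:ℚ)^n * ∑ k ∈ range (n + 1), (-1:ℚ)^k * (n.choose k : ℚ) * harmonic k := by
    rw [← Finset.sum_range_reflect, Finset.mul_sum]
    refine Finset.sum_congr rfl fun j hj => ?_
    simp only [Finset.mem_range] at hj
    have hjn : j ≤ n := by omega
    rw [Nat.add_sub_cancel, Nat.choose_symm hjn, show n - (n - j) = j by omega]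
    have h1 : (-1:ℚ)^(n-j) * (-1:ℚ)^j = (-1:ℚ)^n := by
      rw [← pow_add]; congr 1; omega
    have hj2 : ((-1:ℚ)^j) * ((-1:ℚ)^j) = 1 := by
      rw [← pow_add, Even.neg_one_pow ⟨j, by ring⟩]
    have h2 : (-1:ℚ)^(n-j) = (-1:ℚ)^n * (-1:ℚ)^j := by
      linear_combination ((-1:ℚ)^j) * h1 - ((-1:ℚ)^(n-j)) * hj2
    rw [h2]; ring
  rw [hrefl, T_lem n hn]
  have hn0 : (n:ℚ) ≠ 0 := by positivity
  field_simp

theorem statement3 (n : ℕ) (hn : 1 ≤ n) :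
    (B (n + 1)).eval 0 = (-1) ^ (n + 1) / ((n : ℚ) * n.factorial) ∧
    -(n.factorial : ℚ)⁻¹ *
        ∑ k ∈ Finset.Icc 1 n, (n.choose k : ℚ) * (harmonic n - harmonic (n - k)) * (-1) ^ k
      = (-1) ^ (n + 1) / ((n : ℚ) * n.factorial) := by
  have hn0 : (n:ℚ) ≠ 0 := by positivity
  have hf : (n.factorial : ℚ) ≠ 0 := by positivity
  have key : -(n.factorial : ℚ)⁻¹ *
        ∑ k ∈ Finset.Icc 1 n, (n.choose k : ℚ) * (harmonic n - harmonic (n - k)) * (-1) ^ k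
      = (-1) ^ (n + 1) / ((n : ℚ) * n.factorial) := by
    rw [S_lem n hn]
    field_simp
    ring
  refine ⟨?_, key⟩
  rw [← key]
  simp only [B, eval_mul, eval_C, eval_finset_sum, eval_pow, eval_sub, eval_X, eval_one]
  congr 1
  refine Finset.sum_congr rfl fun k _ => ?_
  norm_num
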